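/- Assume ρ₀(x) = N(x; 0, 1) and ρ₁(x) = Σ_{k=1}^K w_k N(x; μ_k, σ_k²) with σ_k > 0, w_k ≥ 0 and Σ_k w_k = 1, with at least one w_k > 0. For every t ∈ [0,1], x ∈ ℝ and v ∈ ℝ, the velocity distribution satisfies π₁(v; x, t) = Σ_{k=1}^K w̃_{k,t}(x) · N(v; ((1−t)(μ_k − x) + t σ_k² x)/σ̃_{k,t}², σ_k²/σ̃_{k,t}²), where σ̃_{k,t}² = (1−t)² + t² σ_k² and w̃_{k,t}(x) = w_k N(x; t μ_k, σ̃_{k,t}²) / Σ_{k'=1}^K w_{k'} N(x; t μ_{k'}, σ̃_{k',t}²). -/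

import Mathlib

open MeasureTheory Real

/-- The Gaussian density `N(x; μ, σ²) = (2πσ²)^{−1/2} exp(−(x−μ)²/(2σ²))`,
parameterized by its mean `μ` and variance `σsq`. -/
noncomputable def gauss (x μ σsq : ℝ) : ℝ :=
  (Real.sqrt (2 * Real.pi * σsq))⁻¹ * Real.exp (-(x - μ) ^ 2 / (2 * σsq))

lemma gauss_eq_pdf (μ : ℝ) {s : ℝ} (hs : 0 < s) :
    (fun x => gauss x μ s) = ProbabilityTheory.gaussianPDFReal μ ⟨s, hs.le⟩ := rfl

lemma gauss_pos (x μ : ℝ) {s : ℝ} (hs : 0 < s) : 0 < gauss x μ s := by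
  have := ProbabilityTheory.gaussianPDFReal_pos μ ⟨s, hs.le⟩ x (fun h => hs.ne' (congrArg NNReal.toReal h))
  simpa [← gauss_eq_pdf μ hs] using this

lemma integrable_gauss (μ : ℝ) {s : ℝ} (hs : 0 < s) :
    Integrable (fun v => gauss v μ s) := by
  rw [gauss_eq_pdf μ hs]
  exact ProbabilityTheory.integrable_gaussianPDFReal μ _

lemma integral_gauss (μ : ℝ) {s : ℝ} (hs : 0 < s) :
    ∫ v : ℝ, gauss v μ s = 1 := by
  rw [gauss_eq_pdf μ hs]
  exact ProbabilityTheory.integral_gaussianPDFReal_eq_one μ (fun h => hs.ne' (congrArg NNReal.toReal h))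

lemma gauss_prod (t x v mu : ℝ) {s : ℝ} (hs : 0 < s)
    (hst : 0 < (1 - t) ^ 2 + t ^ 2 * s) :
    gauss (x - t * v) 0 1 * gauss (x + (1 - t) * v) mu s =
      gauss x (t * mu) ((1 - t) ^ 2 + t ^ 2 * s) *
        gauss v (((1 - t) * (mu - x) + t * s * x) / ((1 - t) ^ 2 + t ^ 2 * s))
          (s / ((1 - t) ^ 2 + t ^ 2 * s)) := by
  set S : ℝ := (1 - t) ^ 2 + t ^ 2 * s with hS
  unfold gauss
  have h2π : (0:ℝ) < 2 * Real.pi := by positivity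
  have hnorm : (Real.sqrt (2 * Real.pi * 1))⁻¹ * (Real.sqrt (2 * Real.pi * s))⁻¹
      = (Real.sqrt (2 * Real.pi * S))⁻¹ * (Real.sqrt (2 * Real.pi * (s / S)))⁻¹ := by
    rw [← mul_inv, ← mul_inv, ← Real.sqrt_mul (by positivity), ← Real.sqrt_mul (by positivity)]
    congr 1
    field_simp
  have hexp : Real.exp (-(x - t * v - 0) ^ 2 / (2 * 1)) *
      Real.exp (-(x + (1 - t) * v - mu) ^ 2 / (2 * s)) =
      Real.exp (-(x - t * mu) ^ 2 / (2 * S)) *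
      Real.exp (-(v - ((1 - t) * (mu - x) + t * s * x) / S) ^ 2 / (2 * (s / S))) := by
    rw [← Real.exp_add, ← Real.exp_add]
    congr 1
    field_simp
    ring
  calc (Real.sqrt (2 * Real.pi * 1))⁻¹ * Real.exp (-(x - t * v - 0) ^ 2 / (2 * 1)) *
        ((Real.sqrt (2 * Real.pi * s))⁻¹ * Real.exp (-(x + (1 - t) * v - mu) ^ 2 / (2 * s)))
      = ((Real.sqrt (2 * Real.pi * 1))⁻¹ * (Real.sqrt (2 * Real.pi * s))⁻¹) *
        (Real.exp (-(x - t * v - 0) ^ 2 / (2 * 1)) *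
          Real.exp (-(x + (1 - t) * v - mu) ^ 2 / (2 * s))) := by ring
    _ = _ := by rw [hnorm, hexp]; ring

/-- Let `ρ₀(x) = N(x; 0, 1)` and
`ρ₁(x) = Σ_k w_k N(x; μ_k, σ_k²)` with `σ_k > 0`, `w_k ≥ 0`, `Σ_k w_k = 1`, and at
least one `w_k > 0`.  With `ρ_t(x) = ∫ ρ₀(x − tv) ρ₁(x + (1−t)v) dv` the density of
the interpolant, for every `t ∈ [0,1]`, `x` and `v`, the velocity distribution
`π₁(v; x, t) = ρ₀(x − tv) ρ₁(x + (1−t)v) / ρ_t(x)` equals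
`Σ_k w̃_{k,t}(x) N(v; ((1−t)(μ_k − x) + t σ_k² x)/σ̃_{k,t}², σ_k²/σ̃_{k,t}²)`, where
`σ̃_{k,t}² = (1−t)² + t² σ_k²` and
`w̃_{k,t}(x) = w_k N(x; t μ_k, σ̃_{k,t}²) / Σ_{k'} w_{k'} N(x; t μ_{k'}, σ̃_{k',t}²)`. -/
theorem velocity_distribution_gaussian_mixture
    (K : ℕ) (w μ σ : Fin K → ℝ)
    (hσ : ∀ k, 0 < σ k) (hw : ∀ k, 0 ≤ w k) (hw1 : ∑ k, w k = 1)
    (hwpos : ∃ k, 0 < w k)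
    (ρ₀ ρ₁ : ℝ → ℝ)
    (hρ₀ : ∀ x, ρ₀ x = gauss x 0 1)
    (hρ₁ : ∀ x, ρ₁ x = ∑ k, w k * gauss x (μ k) (σ k ^ 2))
    (ρt : ℝ → ℝ → ℝ)
    (hρt : ∀ t x, ρt t x = ∫ v : ℝ, ρ₀ (x - t * v) * ρ₁ (x + (1 - t) * v) ∂volume)
    (t : ℝ) (ht : t ∈ Set.Icc (0 : ℝ) 1) (x v : ℝ) :
    ρ₀ (x - t * v) * ρ₁ (x + (1 - t) * v) / ρt t x
      = ∑ k,
          (w k * gauss x (t * μ k) ((1 - t) ^ 2 + t ^ 2 * σ k ^ 2)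
              / ∑ k', w k' * gauss x (t * μ k') ((1 - t) ^ 2 + t ^ 2 * σ k' ^ 2))
            * gauss v
                (((1 - t) * (μ k - x) + t * σ k ^ 2 * x) / ((1 - t) ^ 2 + t ^ 2 * σ k ^ 2))
                (σ k ^ 2 / ((1 - t) ^ 2 + t ^ 2 * σ k ^ 2)) := by
  have hSpos : ∀ k, 0 < (1 - t) ^ 2 + t ^ 2 * σ k ^ 2 := by
    intro k
    rcases eq_or_ne t 0 with h | h
    · norm_num [h]
    · have h1 : 0 < t ^ 2 := by positivity
      exact add_pos_of_nonneg_of_pos (sq_nonneg _) (mul_pos h1 (pow_pos (hσ k) 2))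
  have hσsq : ∀ k, 0 < σ k ^ 2 := fun k => pow_pos (hσ k) 2
  have hnum : ∀ v' : ℝ, ρ₀ (x - t * v') * ρ₁ (x + (1 - t) * v')
      = ∑ k, w k * (gauss x (t * μ k) ((1 - t) ^ 2 + t ^ 2 * σ k ^ 2) *
          gauss v' (((1 - t) * (μ k - x) + t * σ k ^ 2 * x) / ((1 - t) ^ 2 + t ^ 2 * σ k ^ 2))
            (σ k ^ 2 / ((1 - t) ^ 2 + t ^ 2 * σ k ^ 2))) := by
    intro v'
    rw [hρ₀, hρ₁, Finset.mul_sum]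
    refine Finset.sum_congr rfl fun k _ => ?_
    rw [mul_left_comm, gauss_prod t x v' (μ k) (hσsq k) (hSpos k)]
  have hden : ρt t x = ∑ k, w k * gauss x (t * μ k) ((1 - t) ^ 2 + t ^ 2 * σ k ^ 2) := by
    rw [hρt]
    calc ∫ v' : ℝ, ρ₀ (x - t * v') * ρ₁ (x + (1 - t) * v')
        = ∫ v' : ℝ, ∑ k, (w k * gauss x (t * μ k) ((1 - t) ^ 2 + t ^ 2 * σ k ^ 2)) *
            gauss v' (((1 - t) * (μ k - x) + t * σ k ^ 2 * x) / ((1 - t) ^ 2 + t ^ 2 * σ k ^ 2))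
              (σ k ^ 2 / ((1 - t) ^ 2 + t ^ 2 * σ k ^ 2)) := by
          refine integral_congr_ae (ae_of_all _ fun v' => ?_)
          simp only []
          rw [hnum v']
          exact Finset.sum_congr rfl fun k _ => by ring
      _ = ∑ k, ∫ v' : ℝ, (w k * gauss x (t * μ k) ((1 - t) ^ 2 + t ^ 2 * σ k ^ 2)) *
            gauss v' (((1 - t) * (μ k - x) + t * σ k ^ 2 * x) / ((1 - t) ^ 2 + t ^ 2 * σ k ^ 2))
              (σ k ^ 2 / ((1 - t) ^ 2 + t ^ 2 * σ k ^ 2)) := by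
          refine integral_finset_sum _ fun k _ => ?_
          exact (integrable_gauss _ (div_pos (hσsq k) (hSpos k))).const_mul _
      _ = ∑ k, w k * gauss x (t * μ k) ((1 - t) ^ 2 + t ^ 2 * σ k ^ 2) := by
          refine Finset.sum_congr rfl fun k _ => ?_
          rw [integral_const_mul, integral_gauss _ (div_pos (hσsq k) (hSpos k)), mul_one]
  have hDpos : 0 < ∑ k, w k * gauss x (t * μ k) ((1 - t) ^ 2 + t ^ 2 * σ k ^ 2) := by
    obtain ⟨k0, hk0⟩ := hwpos
    refine Finset.sum_pos' (fun k _ => mul_nonneg (hw k) (gauss_pos x _ (hSpos k)).le)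
      ⟨k0, Finset.mem_univ _, mul_pos hk0 (gauss_pos x _ (hSpos k0))⟩
  rw [hnum v, hden, Finset.sum_div]
  exact Finset.sum_congr rfl fun k _ => by ring
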